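/- Let p > 1, a ∈ [1/4, 1], and for b ≥ 0 set V_{a,b}(y) := ((a + 1/2)/(p − 1 + b y²))^{1/(p−1)}. Define G₁ := the 2×2 matrix with entries G₁[1,1] = ⟨−y² e^{−a y²/4}, e^{−a y²/4}⟩, G₁[1,2] = (a + 1/2)^{−1} ⟨e^{−a y²/4}, e^{−a y²/4}⟩, G₁[2,1] = ⟨−y² e^{−a y²/4}, (1 − a y²) e^{−a y²/4}⟩, G₁[2,2] = 0 (L² inner products on ℝ). Then G₁ is invertible, with determinant bounded away from 0 uniformly for a ∈ [1/4, 1]. -/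

import Mathlib

open MeasureTheory

/-- The matrix `G₁` appearing in the Lyapunov–Schmidt splitting, built from
`L²(ℝ)` inner products of Gaussian functions. -/
noncomputable def GOne (a : ℝ) : Matrix (Fin 2) (Fin 2) ℝ :=
  Matrix.of
    ![![∫ y : ℝ, (-(y ^ 2) * Real.exp (-a * y ^ 2 / 4)) * Real.exp (-a * y ^ 2 / 4),
        (a + 1 / 2)⁻¹ * ∫ y : ℝ, Real.exp (-a * y ^ 2 / 4) * Real.exp (-a * y ^ 2 / 4)],
      ![∫ y : ℝ, (-(y ^ 2) * Real.exp (-a * y ^ 2 / 4)) *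
          ((1 - a * y ^ 2) * Real.exp (-a * y ^ 2 / 4)),
        0]]

open Real

lemma gauss_Ioi {b : ℝ} (hb : 0 < b) {s : ℝ} (hs : -1 < s) :
    ∫ x in Set.Ioi (0 : ℝ), x ^ s * Real.exp (-b * x ^ 2) =
      b ^ (-(s + 1) / 2) * (1 / 2) * Real.Gamma ((s + 1) / 2) := by
  rw [← integral_rpow_mul_exp_neg_mul_rpow zero_lt_two hs hb]
  refine setIntegral_congr_fun measurableSet_Ioi fun x hx => ?_
  rw [Real.rpow_two]

lemma exp_prod (a y : ℝ) :
    Real.exp (-a * y ^ 2 / 4) * Real.exp (-a * y ^ 2 / 4) =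
      Real.exp (-(a / 2) * y ^ 2) := by
  rw [← Real.exp_add]; ring_nf

/-- The value of the off-diagonal entry `G₁[2,1]`. -/
lemma G10_value {a : ℝ} (ha : 0 < a) :
    ∫ y : ℝ, (-(y ^ 2) * Real.exp (-a * y ^ 2 / 4)) *
        ((1 - a * y ^ 2) * Real.exp (-a * y ^ 2 / 4)) =
      Real.sqrt π * (a / 2) ^ (-(3 : ℝ) / 2) := by
  have hb : (0 : ℝ) < a / 2 := by linarith
  set f : ℝ → ℝ := fun x => a * (x ^ (4 : ℝ) * Real.exp (-(a / 2) * x ^ 2)) -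
      x ^ (2 : ℝ) * Real.exp (-(a / 2) * x ^ 2) with hf
  have h1 : ∫ y : ℝ, (-(y ^ 2) * Real.exp (-a * y ^ 2 / 4)) *
        ((1 - a * y ^ 2) * Real.exp (-a * y ^ 2 / 4)) = ∫ y : ℝ, f |y| := by
    congr 1; funext y
    have h2 : |y| ^ (2 : ℝ) = y ^ 2 := by
      rw [Real.rpow_two, sq_abs]
    have h4 : |y| ^ (4 : ℝ) = y ^ 4 := by
      rw [show ((4 : ℝ) = ((4 : ℕ) : ℝ)) by norm_num, Real.rpow_natCast, pow_abs,
        abs_of_nonneg (by positivity)]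
    simp only [hf, h2, h4, sq_abs]
    calc (-(y ^ 2) * Real.exp (-a * y ^ 2 / 4)) * ((1 - a * y ^ 2) * Real.exp (-a * y ^ 2 / 4))
        = (-(y ^ 2) * (1 - a * y ^ 2)) *
            (Real.exp (-a * y ^ 2 / 4) * Real.exp (-a * y ^ 2 / 4)) := by ring
      _ = (-(y ^ 2) * (1 - a * y ^ 2)) * Real.exp (-(a / 2) * y ^ 2) := by rw [exp_prod]
      _ = a * (y ^ 4 * Real.exp (-(a / 2) * y ^ 2)) - y ^ 2 * Real.exp (-(a / 2) * y ^ 2) := by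
          ring
  rw [h1, integral_comp_abs]
  have hI4 : IntegrableOn (fun x : ℝ => x ^ (4 : ℝ) * Real.exp (-(a / 2) * x ^ 2))
      (Set.Ioi 0) := integrableOn_rpow_mul_exp_neg_mul_sq hb (by norm_num)
  have hI2 : IntegrableOn (fun x : ℝ => x ^ (2 : ℝ) * Real.exp (-(a / 2) * x ^ 2))
      (Set.Ioi 0) := integrableOn_rpow_mul_exp_neg_mul_sq hb (by norm_num)
  rw [hf, integral_sub (hI4.const_mul a) hI2, integral_const_mul,
    gauss_Ioi hb (by norm_num : (-1:ℝ) < 4), gauss_Ioi hb (by norm_num : (-1:ℝ) < 2)]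
  have hG12 : Real.Gamma ((1:ℝ)/2) = Real.sqrt π := Real.Gamma_one_half_eq
  have hG32 : Real.Gamma ((3:ℝ)/2) = Real.sqrt π / 2 := by
    have := Real.Gamma_add_one (s := (1:ℝ)/2) (by norm_num)
    rw [show (1:ℝ)/2 + 1 = 3/2 by norm_num] at this
    rw [this, hG12]; ring
  have hG52 : Real.Gamma ((5:ℝ)/2) = 3 * Real.sqrt π / 4 := by
    have := Real.Gamma_add_one (s := (3:ℝ)/2) (by norm_num)
    rw [show (3:ℝ)/2 + 1 = 5/2 by norm_num] at this
    rw [this, hG32]; ring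
  rw [show (-((4:ℝ)+1)/2) = -5/2 by norm_num, show (((4:ℝ)+1)/2) = 5/2 by norm_num,
    show (-((2:ℝ)+1)/2) = -3/2 by norm_num, show (((2:ℝ)+1)/2) = 3/2 by norm_num,
    hG52, hG32]
  have key : a * (a / 2) ^ ((-5:ℝ) / 2) = 2 * (a / 2) ^ ((-3:ℝ) / 2) := by
    have h5 : (a / 2) ^ ((-5:ℝ)/2) = (a / 2) ^ ((-3:ℝ)/2) * (a / 2) ^ (-1 : ℝ) := by
      rw [← Real.rpow_add hb]; norm_num
    rw [h5, Real.rpow_neg_one]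
    field_simp
  linear_combination (3 * Real.sqrt π / 4) * key

/-- The value of the Gaussian self inner product. -/
lemma G01_value {a : ℝ} (ha : 0 < a) :
    ∫ y : ℝ, Real.exp (-a * y ^ 2 / 4) * Real.exp (-a * y ^ 2 / 4) =
      Real.sqrt π * (a / 2) ^ (-(1 : ℝ) / 2) := by
  have hb : (0 : ℝ) < a / 2 := by linarith
  have h1 : ∫ y : ℝ, Real.exp (-a * y ^ 2 / 4) * Real.exp (-a * y ^ 2 / 4) =
      ∫ y : ℝ, Real.exp (-(a / 2) * y ^ 2) := by
    congr 1; funext y; exact exp_prod a y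
  rw [h1, integral_gaussian, Real.sqrt_div Real.pi_pos.le (a/2), div_eq_mul_inv,
    Real.sqrt_eq_rpow (a/2), ← Real.rpow_neg hb.le]
  norm_num

lemma GOne_det {a : ℝ} (ha : 0 < a) :
    (GOne a).det = -((a + 1 / 2)⁻¹ * (4 * π / a ^ 2)) := by
  have hb : (0 : ℝ) < a / 2 := by linarith
  have hd : (GOne a).det =
      -(((a + 1 / 2)⁻¹ * ∫ y : ℝ, Real.exp (-a * y ^ 2 / 4) * Real.exp (-a * y ^ 2 / 4)) *
        ∫ y : ℝ, (-(y ^ 2) * Real.exp (-a * y ^ 2 / 4)) *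
          ((1 - a * y ^ 2) * Real.exp (-a * y ^ 2 / 4))) := by
    rw [GOne, Matrix.det_fin_two]
    simp
  rw [hd, G01_value ha, G10_value ha]
  have hpi : Real.sqrt π * Real.sqrt π = π := Real.mul_self_sqrt Real.pi_pos.le
  have hr : (a / 2) ^ (-(1:ℝ)/2) * (a / 2) ^ (-(3:ℝ)/2) = (a / 2) ^ (-2 : ℝ) := by
    rw [← Real.rpow_add hb]; norm_num
  have hr2 : (a / 2) ^ (-2 : ℝ) = ((a / 2) ^ (2:ℕ))⁻¹ := by
    rw [show (-2 : ℝ) = -((2:ℕ):ℝ) by norm_num, Real.rpow_neg hb.le, Real.rpow_natCast]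
  have key : Real.sqrt π * (a / 2) ^ (-(1:ℝ) / 2) * (Real.sqrt π * (a / 2) ^ (-(3:ℝ)/2)) =
      4 * π / a ^ 2 := by
    calc Real.sqrt π * (a / 2) ^ (-(1:ℝ) / 2) * (Real.sqrt π * (a / 2) ^ (-(3:ℝ)/2))
        = (Real.sqrt π * Real.sqrt π) * ((a / 2) ^ (-(1:ℝ)/2) * (a / 2) ^ (-(3:ℝ)/2)) := by ring
      _ = π * ((a / 2) ^ (2:ℕ))⁻¹ := by rw [hpi, hr, hr2]
      _ = 4 * π / a ^ 2 := by
          rw [eq_div_iff (by positivity)]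
          field_simp
          ring
  rw [mul_assoc, key]

/-- `G₁` is invertible with determinant bounded away from `0`
uniformly for `a ∈ [1/4, 1]`. -/
theorem GOne_invertible (p : ℝ) (hp : 1 < p) :
    ∃ δ > (0 : ℝ), ∀ a ∈ Set.Icc (1 / 4 : ℝ) 1,
      IsUnit (GOne a) ∧ δ ≤ |(GOne a).det| := by
  refine ⟨8, by norm_num, fun a ha => ?_⟩
  obtain ⟨ha1, ha2⟩ := ha
  have ha0 : (0 : ℝ) < a := by linarith
  have hdet : (GOne a).det = -((a + 1 / 2)⁻¹ * (4 * π / a ^ 2)) := GOne_det ha0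
  have hpos : (0 : ℝ) < (a + 1 / 2)⁻¹ * (4 * π / a ^ 2) := by positivity
  have habs : |(GOne a).det| = (a + 1 / 2)⁻¹ * (4 * π / a ^ 2) := by
    rw [hdet, abs_neg, abs_of_pos hpos]
  have hbound : (8 : ℝ) ≤ (a + 1 / 2)⁻¹ * (4 * π / a ^ 2) := by
    have h1 : ((3 : ℝ) / 2)⁻¹ ≤ (a + 1 / 2)⁻¹ :=
      inv_anti₀ (by linarith) (by linarith)
    have h2 : (4 * π / 1 : ℝ) ≤ 4 * π / a ^ 2 := by
      apply div_le_div_of_nonneg_left (by positivity) (by positivity)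
      nlinarith
    have h3 : ((3:ℝ)/2)⁻¹ * (4 * π / 1) ≤ (a + 1 / 2)⁻¹ * (4 * π / a ^ 2) :=
      mul_le_mul h1 h2 (by positivity) (by positivity)
    have hpi : (3 : ℝ) ≤ π := Real.pi_gt_three.le
    calc (8 : ℝ) ≤ (3/2)⁻¹ * (4 * π / 1) := by
          rw [div_one]; nlinarith
      _ ≤ _ := h3
  refine ⟨?_, habs ▸ hbound⟩
  rw [Matrix.isUnit_iff_isUnit_det, isUnit_iff_ne_zero, hdet]
  exact neg_ne_zero.mpr (ne_of_gt hpos)
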